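/- Let G be a finite graph with m edges, and let H be a graph such that there is no homomorphism from G to H. Then for every n ≥ 3 with n > m, there is no graph homomorphism from G to the quotient graph Hⁿ/∼. -/

import Mathlib

/-- `a` is `x`-almost-constant: all coordinates of `a` except possibly one equal `x`. -/
def AlmostConst {V : Type*} {n : ℕ} (x : V) (a : Fin n → V) : Prop :=
  ∃ i : Fin n, ∀ j, j ≠ i → a j = x

/-- The relation `∼`: `a ∼ b` iff `a = b` or `a` and `b` are both `x`-almost-constant
for some vertex `x`. -/
def SimRel {V : Type*} (n : ℕ) (a b : Fin n → V) : Prop :=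
  a = b ∨ ∃ x : V, AlmostConst x a ∧ AlmostConst x b

/-- The quotient graph `Hⁿ/∼`: vertices are the classes of `∼`, and two distinct
classes are adjacent iff they contain representatives that are adjacent in every
coordinate. -/
def quotGraph {V : Type*} (H : SimpleGraph V) (n : ℕ) :
    SimpleGraph (Quot (SimRel (V := V) n)) where
  Adj A B := A ≠ B ∧ ∃ a b : Fin n → V,
    Quot.mk (SimRel n) a = A ∧ Quot.mk (SimRel n) b = B ∧ ∀ i, H.Adj (a i) (b i)
  symm := by
    refine ⟨?_⟩
    rintro A B ⟨hne, a, b, ha, hb, hadj⟩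
    exact ⟨hne.symm, b, a, hb, ha, fun i => (hadj i).symm⟩
  loopless := by
    refine ⟨?_⟩
    rintro A ⟨hne, -⟩
    exact hne rfl

theorem exists_ne_ne {n : ℕ} (hn : 3 ≤ n) (i i' : Fin n) : ∃ j : Fin n, j ≠ i ∧ j ≠ i' := by
  by_contra hc
  push_neg at hc
  have hsub : (Finset.univ : Finset (Fin n)) ⊆ {i, i'} := by
    intro j _
    rcases Classical.em (j = i) with rfl | h
    · simp
    · simp [hc j h]
  have h1 := Finset.card_le_card hsub
  have h2 : ({i, i'} : Finset (Fin n)).card ≤ 2 :=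
    (Finset.card_insert_le _ _).trans (by simp)
  simp [Finset.card_univ] at h1
  omega

theorem ac_unique {V : Type*} {n : ℕ} (hn : 3 ≤ n) {x y : V} {a : Fin n → V}
    (hx : AlmostConst x a) (hy : AlmostConst y a) : x = y := by
  obtain ⟨i, hi⟩ := hx
  obtain ⟨i', hi'⟩ := hy
  obtain ⟨j, hj1, hj2⟩ := exists_ne_ne hn i i'
  rw [← hi j hj1, ← hi' j hj2]

theorem simrel_equiv {V : Type*} {n : ℕ} (hn : 3 ≤ n) : Equivalence (SimRel (V := V) n) := by
  constructor
  · intro a; exact Or.inl rfl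
  · rintro a b (rfl | ⟨x, h1, h2⟩)
    · exact Or.inl rfl
    · exact Or.inr ⟨x, h2, h1⟩
  · rintro a b c (rfl | ⟨x, h1, h2⟩) h
    · exact h
    · rcases h with rfl | ⟨y, h3, h4⟩
      · exact Or.inr ⟨x, h1, h2⟩
      · exact Or.inr ⟨x, h1, (ac_unique hn h3 h2) ▸ h4⟩

theorem simrel_of_mk_eq {V : Type*} {n : ℕ} (hn : 3 ≤ n) {a b : Fin n → V}
    (h : Quot.mk (SimRel n) a = Quot.mk (SimRel n) b) : SimRel n a b :=
  ((simrel_equiv hn).eqvGen_iff).mp (Quot.eq.mp h)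

theorem ac_of_simrel {V : Type*} {n : ℕ} (hn : 3 ≤ n) {x : V} {a b : Fin n → V}
    (h : SimRel n a b) (hb : AlmostConst x b) : AlmostConst x a := by
  rcases h with rfl | ⟨y, h1, h2⟩
  · exact hb
  · exact (ac_unique hn h2 hb) ▸ h1

theorem adj_of_ac {V : Type*} {n : ℕ} {H : SimpleGraph V} (hn : 3 ≤ n) {x y : V}
    {a b : Fin n → V} (hx : AlmostConst x a) (hy : AlmostConst y b)
    (hab : ∀ i, H.Adj (a i) (b i)) : H.Adj x y := by
  obtain ⟨i, hi⟩ := hx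
  obtain ⟨i', hi'⟩ := hy
  obtain ⟨j, hj1, hj2⟩ := exists_ne_ne hn i i'
  have := hab j
  rwa [hi j hj1, hi' j hj2] at this

theorem stmt7 {VG VH : Type*} [Fintype VG] (G : SimpleGraph VG) [DecidableRel G.Adj]
    (H : SimpleGraph VH) (hnohom : ¬ Nonempty (G →g H))
    (n : ℕ) (hn3 : 3 ≤ n) (hnm : G.edgeFinset.card < n) :
    ¬ Nonempty (G →g quotGraph H n) := by
  classical
  rintro ⟨f⟩
  choose rep hrep using fun v => Quot.exists_rep (f v)
  -- the candidate colorings, one per coordinate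
  let g : VG → Fin n → VH := fun v i =>
    if h : ∃ x, AlmostConst x (rep v) then h.choose else rep v i
  have hgpos : ∀ v (h : ∃ x, AlmostConst x (rep v)) (i : Fin n), g v i = h.choose :=
    fun v h i => dif_pos h
  have hgneg : ∀ v (h : ¬ ∃ x, AlmostConst x (rep v)) (i : Fin n), g v i = rep v i :=
    fun v h i => dif_neg h
  -- the set of "banned" coordinates for a pair of vertices
  let F : VG → VG → Set (Fin n) := fun u v => {i | ¬ H.Adj (g u i) (g v i)}
  have hF : ∀ u v (i : Fin n), i ∈ F u v ↔ ¬ H.Adj (g u i) (g v i) := fun _ _ _ => Iff.rfl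
  have hFsymm : ∀ u v, F u v = F v u := by
    intro u v
    ext i
    rw [hF, hF]
    exact not_congr ⟨SimpleGraph.Adj.symm, SimpleGraph.Adj.symm⟩
  -- each edge bans at most one coordinate
  have key : ∀ u v, G.Adj u v → ∀ i ∈ F u v, ∀ j ∈ F u v, i = j := by
    intro u v huv
    obtain ⟨-, a, b, ha, hb, hab⟩ := f.map_rel huv
    have hau : SimRel n a (rep u) := simrel_of_mk_eq hn3 (ha.trans (hrep u).symm)
    have hbv : SimRel n b (rep v) := simrel_of_mk_eq hn3 (hb.trans (hrep v).symm)
    have haeq : ¬ (∃ x, AlmostConst x (rep u)) → a = rep u := by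
      intro h
      rcases hau with h' | ⟨y, h1, h2⟩
      · exact h'
      · exact absurd ⟨y, h2⟩ h
    have hbeq : ¬ (∃ x, AlmostConst x (rep v)) → b = rep v := by
      intro h
      rcases hbv with h' | ⟨y, h1, h2⟩
      · exact h'
      · exact absurd ⟨y, h2⟩ h
    by_cases hu : ∃ x, AlmostConst x (rep u) <;> by_cases hv : ∃ x, AlmostConst x (rep v)
    · -- both classes almost-constant: no banned coordinate
      have hax : AlmostConst hu.choose a := ac_of_simrel hn3 hau hu.choose_spec
      have hbx : AlmostConst hv.choose b := ac_of_simrel hn3 hbv hv.choose_spec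
      have hadj : H.Adj hu.choose hv.choose := adj_of_ac hn3 hax hbx hab
      intro i hi
      rw [hF, hgpos u hu, hgpos v hv] at hi
      exact absurd hadj hi
    · -- u almost-constant, v singleton: at most one banned coordinate
      have hax : AlmostConst hu.choose a := ac_of_simrel hn3 hau hu.choose_spec
      obtain ⟨k, hk⟩ := hax
      have hbv' : b = rep v := hbeq hv
      have hgood : ∀ i : Fin n, i ≠ k → H.Adj (g u i) (g v i) := by
        intro i hik
        rw [hgpos u hu, hgneg v hv, ← hbv', ← hk i hik]
        exact hab i
      intro i hi j hj
      rw [hF] at hi hj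
      by_contra hne
      rcases Classical.em (i = k) with rfl | hik
      · exact hj (hgood j (by intro h; exact hne h.symm))
      · exact hi (hgood i hik)
    · -- v almost-constant, u singleton: symmetric
      have hbx : AlmostConst hv.choose b := ac_of_simrel hn3 hbv hv.choose_spec
      obtain ⟨k, hk⟩ := hbx
      have hau' : a = rep u := haeq hu
      have hgood : ∀ i : Fin n, i ≠ k → H.Adj (g u i) (g v i) := by
        intro i hik
        rw [hgpos v hv, hgneg u hu, ← hau', ← hk i hik]
        exact hab i
      intro i hi j hj
      rw [hF] at hi hj
      by_contra hne
      rcases Classical.em (i = k) with rfl | hik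
      · exact hj (hgood j (by intro h; exact hne h.symm))
      · exact hi (hgood i hik)
    · -- both singletons: no banned coordinate
      have hau' : a = rep u := haeq hu
      have hbv' : b = rep v := hbeq hv
      intro i hi
      rw [hF, hgneg u hu, hgneg v hv, ← hau', ← hbv'] at hi
      exact absurd (hab i) hi
  -- pick the banned coordinate (if any) of each edge
  let pick : Set (Fin n) → Fin n := fun s =>
    if h : ∃ i, i ∈ s then h.choose else ⟨0, by omega⟩
  let badmap : Sym2 VG → Fin n :=
    Sym2.lift ⟨fun u v => pick (F u v), fun u v => by show pick (F u v) = pick (F v u); rw [hFsymm]⟩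
  let S : Finset (Fin n) := G.edgeFinset.image badmap
  have hS : S.card < n := lt_of_le_of_lt Finset.card_image_le hnm
  obtain ⟨i₀, hi₀⟩ : ∃ i : Fin n, i ∉ S := by
    by_contra hc
    push_neg at hc
    have := Finset.card_le_card (fun j _ => hc j : (Finset.univ : Finset (Fin n)) ⊆ S)
    simp [Finset.card_univ] at this
    omega
  -- the coordinate i₀ gives a homomorphism G → H
  refine hnohom ⟨⟨fun v => g v i₀, ?_⟩⟩
  intro u v huv
  by_contra hadj
  have hmem : i₀ ∈ F u v := hadj
  have hne : ∃ i, i ∈ F u v := ⟨i₀, hmem⟩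
  have hp : pick (F u v) ∈ F u v := by
    have hpe : pick (F u v) = hne.choose := dif_pos hne
    rw [hpe]
    exact hne.choose_spec
  have heq : i₀ = pick (F u v) := key u v huv i₀ hmem _ hp
  have hmemS : badmap s(u, v) ∈ S :=
    Finset.mem_image_of_mem badmap (by rwa [SimpleGraph.mem_edgeFinset, SimpleGraph.mem_edgeSet])
  have hbm : badmap s(u, v) = pick (F u v) := Sym2.lift_mk _ _ _
  rw [hbm, ← heq] at hmemS
  exact hi₀ hmemS
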